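/- For every positive integer n, if c is a positive integer such that c·P' is integer-valued for every integer-valued polynomial P of degree ≤ n, then c is a multiple of lcm(1,2,...,n). -/

import Mathlib

open Polynomial

/-- A polynomial `P ∈ ℚ[X]` is integer-valued if it takes integer values at all integers. -/
def IntValued (P : Polynomial ℚ) : Prop := ∀ m : ℤ, ∃ z : ℤ, P.eval (m : ℚ) = (z : ℚ)

lemma descPoch_intValued (k : ℕ) :
    IntValued (C ((k.factorial : ℚ))⁻¹ * descPochhammer ℚ k) := by
  intro m
  refine ⟨Ring.choose m k, ?_⟩
  have h1 : (descPochhammer ℤ k).eval m = k.factorial • Ring.choose m k := by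
    rw [Polynomial.eval_eq_smeval, Ring.descPochhammer_eq_factorial_smul_choose]
  have h2 : (((descPochhammer ℤ k).eval m : ℤ) : ℚ) = (descPochhammer ℚ k).eval (m : ℚ) :=
    descPochhammer_eval_cast ℚ k m
  rw [eval_mul, eval_C, ← h2, h1]
  push_cast
  field_simp
  simp [nsmul_eq_mul]

lemma deriv_descPoch_eval (k : ℕ) :
    (derivative (descPochhammer ℚ (k+1))).eval (k : ℚ) = k.factorial := by
  induction k with
  | zero => simp [descPochhammer_one]
  | succ j ih =>
    have hsucc := descPochhammer_succ_right ℚ (j+1)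
    rw [hsucc, derivative_mul, eval_add, eval_mul, eval_mul]
    have hz : ((X : ℚ[X]) - ((j+1 : ℕ) : ℚ[X])).eval ((j+1 : ℕ) : ℚ) = 0 := by
      push_cast
      simp
    rw [hz, mul_zero, zero_add]
    have hd : (derivative ((X : ℚ[X]) - ((j+1 : ℕ) : ℚ[X]))) = 1 := by
      simp
    rw [hd, eval_one, mul_one]
    have h2 : (((descPochhammer ℤ (j+1)).eval ((j+1 : ℕ) : ℤ) : ℤ) : ℚ)
        = (descPochhammer ℚ (j+1)).eval (((j+1 : ℕ) : ℤ) : ℚ) :=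
      descPochhammer_eval_cast ℚ (j+1) ((j+1 : ℕ) : ℤ)
    have h3 : (descPochhammer ℤ (j+1)).eval ((j+1 : ℕ) : ℤ) = (j+1).factorial := by
      rw [Polynomial.eval_eq_smeval]
      rw [show ((j+1 : ℕ) : ℤ) = ((j+1 : ℕ) : ℤ) from rfl]
      rw [descPochhammer_smeval_eq_descFactorial, Nat.descFactorial_self]
    rw [show (((j+1 : ℕ) : ℤ) : ℚ) = ((j+1 : ℕ) : ℚ) by push_cast; ring] at h2
    rw [← h2, h3]
    push_cast
    ring

theorem lcm_dvd_of_derivative_intValued (n : ℕ) (hn : 0 < n) (c : ℕ) (hc : 0 < c)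
    (h : ∀ P : Polynomial ℚ, IntValued P → P.natDegree ≤ n →
      IntValued (C (c : ℚ) * derivative P)) :
    ((Finset.Icc 1 n).lcm id : ℕ) ∣ c := by
  apply Finset.lcm_dvd
  intro k hk
  simp only [Finset.mem_Icc] at hk
  obtain ⟨hk1, hk2⟩ := hk
  obtain ⟨j, rfl⟩ : ∃ j, k = j + 1 := ⟨k - 1, (Nat.succ_pred_eq_of_pos hk1).symm⟩
  set P : ℚ[X] := C (((j+1).factorial : ℚ))⁻¹ * descPochhammer ℚ (j+1) with hP
  have hfac : (((j+1).factorial : ℚ)) ≠ 0 := by positivity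
  have hdeg : P.natDegree ≤ n := by
    rw [hP, natDegree_C_mul (inv_ne_zero hfac), descPochhammer_natDegree]
    exact hk2
  obtain ⟨z, hz⟩ := h P (descPoch_intValued (j+1)) hdeg ((j : ℕ) : ℤ)
  rw [hP, derivative_C_mul, eval_mul, eval_C, eval_mul, eval_C] at hz
  rw [show (((j : ℕ) : ℤ) : ℚ) = (j : ℚ) by push_cast; ring] at hz
  rw [deriv_descPoch_eval j] at hz
  -- hz : c * ((j+1)!⁻¹ * j!) = z, i.e. c / (j+1) = z
  have key : (c : ℚ) = (z : ℚ) * ((j : ℚ) + 1) := by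
    have hfs : ((j+1).factorial : ℚ) = ((j+1 : ℕ) : ℚ) * (j.factorial : ℚ) := by
      rw [Nat.factorial_succ]; push_cast; ring
    have hjf : (j.factorial : ℚ) ≠ 0 := by positivity
    field_simp [hfs] at hz
    push_cast at hz ⊢
    exact mul_right_cancel₀ hjf (by push_cast at hfs; linear_combination hz + (z : ℚ) * hfs)
  have keyZ : (c : ℤ) = z * ((j : ℤ) + 1) := by
    exact_mod_cast key
  have : ((j : ℤ) + 1) ∣ (c : ℤ) := ⟨z, by linarith [keyZ]⟩
  simp only [id]
  exact_mod_cast (by exact_mod_cast this : ((j+1 : ℕ) : ℤ) ∣ (c : ℤ))
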